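/- Let $\mathcal{X}=(x_n)$ be a basis of a Banach space $\mathbb{X}$ whose unconditionality constants satisfy $\mathbf{k}_m\lesssim m^t$ for some $0<t<1/2$, and suppose the dual space $\mathbb{X}^*$ is a GT space. Then $\mathcal{X}$ is $q$-Hilbertian for every $q<1/t$, i.e., there is a constant $C_q$ such that $\|\sum_n a_n x_n\|\le C_q(\sum_n|a_n|^q)^{1/q}$ for all finitely supported scalar sequences $(a_n)$. -/

import Mathlib

open Finset Set
open scoped ENNReal NNReal

noncomputable section

instance : Fact ((1 : ℝ≥0∞) ≤ 2) := ⟨one_le_two⟩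

/-- A (Schauder-type) basis of a Banach space: a norm-bounded biorthogonal system
`(e, c)` whose linear span is dense. -/
structure BBasis (X : Type*) [NormedAddCommGroup X] [NormedSpace ℝ X] where
  e : ℕ → X
  c : ℕ → X →L[ℝ] ℝ
  biorth : ∀ m n, c m (e n) = if m = n then (1 : ℝ) else 0
  e_bdd : ∃ M, ∀ n, ‖e n‖ ≤ M
  c_bdd : ∃ M, ∀ n, ‖c n‖ ≤ M
  dense_span : Dense (Submodule.span ℝ (Set.range e) : Set X)

namespace BBasis

variable {X : Type*} [NormedAddCommGroup X] [NormedSpace ℝ X] (B : BBasis X)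

/-- Coordinate projection on a finite set `A`. -/
def S (A : Finset ℕ) (f : X) : X := ∑ n ∈ A, B.c n f • B.e n

/-- The set `𝒬` of vectors with coefficients in the unit ball of `ℓ∞`. -/
def inQ (f : X) : Prop := ∀ n, |B.c n f| ≤ 1

/-- `A` is the set `A(a,f) = {n : |c n f| ≥ a}`. -/
def thrSet (a : ℝ) (f : X) (A : Finset ℕ) : Prop := ∀ n, n ∈ A ↔ a ≤ |B.c n f|

/-- `A` is a greedy set of `f`. -/
def greedySet (f : X) (A : Finset ℕ) : Prop :=
  ∀ n ∈ A, ∀ k, k ∉ A → |B.c k f| ≤ |B.c n f|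

/-- The restricted truncation operator associated with a finite set `A`. -/
def R (A : Finset ℕ) (f : X) : X :=
  if h : A.Nonempty then
    (A.inf' h fun n => |B.c n f|) • ∑ n ∈ A, Real.sign (B.c n f) • B.e n
  else 0

/-- The basis is truncation quasi-greedy. -/
def TruncationQG : Prop :=
  ∃ C : ℝ, ∀ f (A : Finset ℕ), B.greedySet f A → ‖B.R A f‖ ≤ C * ‖f‖

/-- The basis is equivalent to the unit vector basis of `c₀`. -/
def EquivC0 : Prop :=
  ∃ c C : ℝ, 0 < c ∧ ∀ (A : Finset ℕ) (hA : A.Nonempty) (a : ℕ → ℝ),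
    c * (A.sup' hA fun n => |a n|) ≤ ‖∑ n ∈ A, a n • B.e n‖ ∧
    ‖∑ n ∈ A, a n • B.e n‖ ≤ C * (A.sup' hA fun n => |a n|)

end BBasis

/-- A Banach space `Y` is a GT space: every bounded operator `T : Y → ℓ₂` is
absolutely summing. -/
def IsGTSpace (Y : Type*) [NormedAddCommGroup Y] [NormedSpace ℝ Y] : Prop :=
  ∀ T : Y →L[ℝ] lp (fun _ : ℕ => ℝ) 2, ∃ C : ℝ,
    ∀ (A : Finset ℕ) (g : ℕ → Y) (M : ℝ),
      (∀ ε : ℕ → ℝ, (∀ k ∈ A, |ε k| = 1) → ‖∑ k ∈ A, ε k • g k‖ ≤ M) →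
      ∑ k ∈ A, ‖T (g k)‖ ≤ C * M


namespace Stmt7Aux

local notation "ℓ2" => lp (fun _ : ℕ => ℝ) 2

lemma tr2 : ((2:ℝ≥0∞)).toReal = 2 := by norm_num
lemma tr2pos : (0:ℝ) < (2:ℝ≥0∞).toReal := by norm_num

lemma rpow_tr2 (a : ℝ) : a ^ ((2:ℝ≥0∞).toReal) = a * a := by
  rw [tr2, show (2:ℝ) = ((2:ℕ):ℝ) by norm_num, Real.rpow_natCast]
  ring

variable {Y : Type*} [NormedAddCommGroup Y] [NormedSpace ℝ Y]

/-- combine countably many norm-≤1 operators into one. -/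
lemma exists_combined (T : ℕ → Y →L[ℝ] ℓ2) (hT : ∀ j, ‖T j‖ ≤ 1) :
    ∃ S : Y →L[ℝ] ℓ2, ∀ j y, (1/2:ℝ)^(j+1) * ‖T j y‖ ≤ ‖S y‖ := by
  classical
  set w : ℕ → ℝ := fun j => (1/2:ℝ)^(j+1) with hw
  have hw0 : ∀ j, 0 < w j := fun j => by positivity
  set G : Y → ℕ × ℕ → ℝ := fun y p => w p.1 * (T p.1 y) p.2 with hG
  set F : Y → ℕ → ℝ := fun y n => G y (Nat.pairEquiv.symm n) with hF
  have hfib : ∀ (y : Y) (j : ℕ),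
      HasSum (fun k => ‖G y (j, k)‖ ^ (2:ℝ≥0∞).toReal)
        ((w j * w j) * (‖T j y‖ ^ (2:ℝ≥0∞).toReal)) := by
    intro y j
    have h := (lp.hasSum_norm tr2pos (T j y)).mul_left (w j * w j)
    have h2 : (fun k => ‖G y (j, k)‖ ^ (2:ℝ≥0∞).toReal)
        = fun k => w j * w j * ‖(T j y : ℕ → ℝ) k‖ ^ (2:ℝ≥0∞).toReal := by
      funext k
      rw [rpow_tr2, rpow_tr2]
      simp only [hG, Real.norm_eq_abs, abs_mul]
      rw [abs_of_pos (hw0 j)]; ring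
    rw [h2]; exact h
  have hTle : ∀ (y : Y) (j : ℕ), ‖T j y‖ ≤ ‖y‖ := fun y j =>
    ((T j).le_opNorm y).trans (by
      calc ‖T j‖ * ‖y‖ ≤ 1 * ‖y‖ := mul_le_mul_of_nonneg_right (hT j) (norm_nonneg y)
      _ = ‖y‖ := one_mul _)
  have hwid : ∀ j, w j * w j = (1/4:ℝ) * (1/4)^j := by
    intro j; simp only [hw]; rw [← mul_pow]; rw [pow_succ]; ring
  have hwsum : Summable (fun j => w j * w j) := by
    refine Summable.congr ((summable_geometric_of_lt_one (r := (1/4:ℝ)) (by norm_num)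
      (by norm_num)).mul_left ((1:ℝ)/4)) (fun j => (hwid j).symm)
  have hwsum_le : ∑' j, w j * w j ≤ 1 := by
    have : ∑' j, w j * w j = (1/4) * ∑' j : ℕ, ((1:ℝ)/4)^j := by
      rw [← tsum_mul_left]; exact tsum_congr hwid
    rw [this, tsum_geometric_of_lt_one (by norm_num) (by norm_num)]
    norm_num
  have hfibS : ∀ (y : Y) j, Summable (fun k => ‖G y (j,k)‖ ^ (2:ℝ≥0∞).toReal) :=
    fun y j => (hfib y j).summable
  have hsig : ∀ y : Y, Summable (fun j => (w j * w j) * (‖T j y‖ ^ (2:ℝ≥0∞).toReal)) := by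
    intro y
    refine Summable.of_nonneg_of_le (fun j => by positivity) (fun j => ?_)
      (hwsum.mul_right (‖y‖ ^ (2:ℝ≥0∞).toReal))
    exact mul_le_mul_of_nonneg_left
      (Real.rpow_le_rpow (norm_nonneg _) (hTle y j) tr2pos.le) (by positivity)
  have hGsum : ∀ y : Y, Summable (fun p : ℕ × ℕ => ‖G y p‖ ^ (2:ℝ≥0∞).toReal) := by
    intro y
    refine (summable_prod_of_nonneg (fun p => by positivity)).2 ⟨fun j => hfibS y j, ?_⟩
    refine (hsig y).congr (fun j => ?_)
    exact ((hfib y j).tsum_eq).symm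
  have hGt : ∀ y : Y, ∑' p : ℕ × ℕ, ‖G y p‖ ^ (2:ℝ≥0∞).toReal ≤ ‖y‖ ^ (2:ℝ≥0∞).toReal := by
    intro y
    rw [Summable.tsum_prod' (hGsum y) (fun j => hfibS y j)]
    calc (∑' (j : ℕ) (k : ℕ), ‖G y (j, k)‖ ^ (2:ℝ≥0∞).toReal)
        = ∑' j : ℕ, (w j * w j) * (‖T j y‖ ^ (2:ℝ≥0∞).toReal) :=
          tsum_congr (fun j => (hfib y j).tsum_eq)
      _ ≤ ∑' j : ℕ, (w j * w j) * (‖y‖ ^ (2:ℝ≥0∞).toReal) := by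
          refine Summable.tsum_le_tsum (fun j => ?_) (hsig y) (hwsum.mul_right _)
          exact mul_le_mul_of_nonneg_left
            (Real.rpow_le_rpow (norm_nonneg _) (hTle y j) tr2pos.le) (by positivity)
      _ = (∑' j, w j * w j) * (‖y‖ ^ (2:ℝ≥0∞).toReal) := tsum_mul_right
      _ ≤ 1 * (‖y‖ ^ (2:ℝ≥0∞).toReal) :=
          mul_le_mul_of_nonneg_right hwsum_le (by positivity)
      _ = _ := one_mul _
  have hFy : ∀ y : Y, Summable (fun n => ‖F y n‖ ^ (2:ℝ≥0∞).toReal) := by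
    intro y
    exact (Nat.pairEquiv.symm.summable_iff
      (f := fun p => ‖G y p‖ ^ (2:ℝ≥0∞).toReal)).2 (hGsum y)
  have hFmem : ∀ y : Y, Memℓp (F y) 2 := fun y => memℓp_gen (hFy y)
  have hFt : ∀ y : Y, ∑' n, ‖F y n‖ ^ (2:ℝ≥0∞).toReal ≤ ‖y‖ ^ (2:ℝ≥0∞).toReal := by
    intro y
    calc ∑' n, ‖F y n‖ ^ (2:ℝ≥0∞).toReal
        = ∑' p : ℕ × ℕ, ‖G y p‖ ^ (2:ℝ≥0∞).toReal :=
          Equiv.tsum_eq Nat.pairEquiv.symm (fun p => ‖G y p‖ ^ (2:ℝ≥0∞).toReal)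
      _ ≤ _ := hGt y
  set Llin : Y →ₗ[ℝ] ℓ2 :=
    { toFun := fun y => ⟨F y, hFmem y⟩
      map_add' := by
        intro y z
        apply Subtype.ext
        funext n
        show F (y + z) n = F y n + F z n
        simp only [hF, hG, map_add]
        rw [lp.coeFn_add]
        simp [mul_add]
      map_smul' := by
        intro c y
        apply Subtype.ext
        funext n
        show F (c • y) n = c • F y n
        simp only [hF, hG, map_smul]
        rw [lp.coeFn_smul]
        simp [smul_eq_mul]
        ring } with hL
  have hbd : ∀ y, ‖Llin y‖ ≤ 1 * ‖y‖ := by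
    intro y
    rw [one_mul]
    refine lp.norm_le_of_tsum_le tr2pos (norm_nonneg y) ?_
    exact hFt y
  refine ⟨Llin.mkContinuous 1 hbd, fun j y => ?_⟩
  have hSy : (LinearMap.mkContinuous Llin 1 hbd) y = Llin y := rfl
  have h1 : ∑' k, ‖G y (j,k)‖ ^ (2:ℝ≥0∞).toReal
      ≤ ∑' n, ‖F y n‖ ^ (2:ℝ≥0∞).toReal := by
    refine Summable.tsum_le_tsum_of_inj (fun k => Nat.pairEquiv (j, k)) ?_
      (fun c _ => by positivity) (fun k => le_of_eq ?_) (hfibS y j) (hFy y)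
    · intro a b hab
      have := Nat.pairEquiv.injective hab
      simpa using congrArg Prod.snd this
    · simp only [hF, Equiv.symm_apply_apply]
  have h2 : (w j * ‖T j y‖) * (w j * ‖T j y‖) ≤ ‖Llin y‖ * ‖Llin y‖ := by
    have hnr := lp.norm_rpow_eq_tsum tr2pos (Llin y)
    have hco : ∀ n, (Llin y : ∀ _ : ℕ, ℝ) n = F y n := fun n => rfl
    calc (w j * ‖T j y‖) * (w j * ‖T j y‖)
        = (w j * w j) * (‖T j y‖ ^ (2:ℝ≥0∞).toReal) := by rw [rpow_tr2]; ring
      _ = ∑' k, ‖G y (j,k)‖ ^ (2:ℝ≥0∞).toReal := ((hfib y j).tsum_eq).symm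
      _ ≤ ∑' n, ‖F y n‖ ^ (2:ℝ≥0∞).toReal := h1
      _ = ‖Llin y‖ ^ (2:ℝ≥0∞).toReal := by
          rw [hnr]; exact tsum_congr (fun n => by rw [hco])
      _ = ‖Llin y‖ * ‖Llin y‖ := rpow_tr2 _
  rw [hSy]
  nlinarith [norm_nonneg (Llin y), mul_pos (hw0 j) (hw0 j),
    mul_nonneg (hw0 j).le (norm_nonneg (T j y))]


lemma uniformGT (hGT : IsGTSpace Y) :
    ∃ K : ℝ, 0 ≤ K ∧ ∀ T : Y →L[ℝ] ℓ2, ‖T‖ ≤ 1 →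
      ∀ (A : Finset ℕ) (g : ℕ → Y) (M : ℝ),
      (∀ ε : ℕ → ℝ, (∀ k ∈ A, |ε k| = 1) → ‖∑ k ∈ A, ε k • g k‖ ≤ M) →
      ∑ k ∈ A, ‖T (g k)‖ ≤ K * M := by
  have main : ∃ K : ℝ, ∀ T : Y →L[ℝ] ℓ2, ‖T‖ ≤ 1 →
      ∀ (A : Finset ℕ) (g : ℕ → Y) (M : ℝ),
      (∀ ε : ℕ → ℝ, (∀ k ∈ A, |ε k| = 1) → ‖∑ k ∈ A, ε k • g k‖ ≤ M) →
      ∑ k ∈ A, ‖T (g k)‖ ≤ K * M := by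
    by_contra h
    push_neg at h
    choose T hT1 A g M hcond hbig using fun j : ℕ => h ((j:ℝ) * 2^(j+1))
    obtain ⟨S, hSb⟩ := exists_combined T hT1
    obtain ⟨C, hC⟩ := hGT S
    obtain ⟨j, hj⟩ := exists_nat_gt C
    have h1 : ∑ k ∈ A j, ‖S (g j k)‖ ≤ C * M j := hC (A j) (g j) (M j) (hcond j)
    have h2 : (1/2:ℝ)^(j+1) * ∑ k ∈ A j, ‖T j (g j k)‖ ≤ ∑ k ∈ A j, ‖S (g j k)‖ := by
      rw [Finset.mul_sum]
      exact Finset.sum_le_sum fun k _ => hSb j (g j k)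
    have hM0 : 0 ≤ M j := le_trans (norm_nonneg _) (hcond j 1 (by simp))
    have hbig' := hbig j
    have hp : (0:ℝ) < (1/2:ℝ)^(j+1) := by positivity
    -- j * 2^(j+1) * M j < ∑ ‖T j (g j k)‖ ≤ 2^(j+1) * C * M j
    have h3 : (j:ℝ) * 2^(j+1) * M j < 2^(j+1) * (C * M j) := by
      have h6 := h2.trans h1
      have h2p : (0:ℝ) < 2^(j+1) := by positivity
      have h7 := mul_le_mul_of_nonneg_left h6 h2p.le
      have h4 : (2:ℝ)^(j+1) * (((1:ℝ)/2)^(j+1) * ∑ k ∈ A j, ‖T j (g j k)‖)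
          = ∑ k ∈ A j, ‖T j (g j k)‖ := by
        rw [← mul_assoc, ← mul_pow]; norm_num
      rw [h4] at h7
      exact lt_of_lt_of_le hbig' h7
    have h2p : (0:ℝ) < 2^(j+1) := by positivity
    have h5 : (j:ℝ) * M j < C * M j := by
      nlinarith [h3]
    rcases hM0.eq_or_lt with hM | hM
    · rw [← hM] at h5; simp at h5
    · have := lt_of_mul_lt_mul_right h5 hM.le
      linarith
  obtain ⟨K, hK⟩ := main
  refine ⟨max K 0, le_max_right _ _, fun T hT A g M hcond => ?_⟩
  have hM0 : 0 ≤ M := le_trans (norm_nonneg _) (hcond 1 (by simp))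
  exact (hK T hT A g M hcond).trans (mul_le_mul_of_nonneg_right (le_max_left _ _) hM0)

variable {X : Type*} [NormedAddCommGroup X] [NormedSpace ℝ X] (B : BBasis X)

lemma e_ne_zero (n : ℕ) : B.e n ≠ 0 := by
  intro h
  have := B.biorth n n
  rw [h] at this
  simp at this

lemma ct_ge_one {t Ct : ℝ}
    (hk : ∀ (A : Finset ℕ) (f : X), ‖B.S A f‖ ≤ Ct * (A.card : ℝ) ^ t * ‖f‖) :
    1 ≤ Ct := by
  have h := hk {0} (B.e 0)
  have hS : B.S {0} (B.e 0) = B.e 0 := by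
    simp [BBasis.S, B.biorth 0 0]
  rw [hS] at h
  have hcard : (({0} : Finset ℕ).card : ℝ) = 1 := by simp
  rw [hcard, Real.one_rpow, mul_one] at h
  have he : 0 < ‖B.e 0‖ := norm_pos_iff.2 (e_ne_zero B 0)
  nlinarith

lemma signEst {t Ct : ℝ} (ht0 : 0 ≤ t) (hCt : 1 ≤ Ct)
    (hk : ∀ (A : Finset ℕ) (f : X), ‖B.S A f‖ ≤ Ct * (A.card : ℝ) ^ t * ‖f‖)
    (x : X →L[ℝ] ℝ) (hx : ‖x‖ ≤ 1) (Bs : Finset ℕ) (ε : ℕ → ℝ)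
    (hε : ∀ k ∈ Bs, |ε k| = 1) :
    ‖∑ k ∈ Bs, ε k • ((x (B.e k)) • B.c k)‖ ≤ 2 * Ct * (Bs.card:ℝ)^t := by
  classical
  have hb : (0:ℝ) ≤ 2 * Ct * (Bs.card:ℝ)^t := by positivity
  refine ContinuousLinearMap.opNorm_le_bound _ hb (fun f => ?_)
  have happ : (∑ k ∈ Bs, ε k • ((x (B.e k)) • B.c k)) f
      = x (∑ k ∈ Bs, (ε k * B.c k f) • B.e k) := by
    rw [map_sum]
    rw [ContinuousLinearMap.sum_apply]
    refine Finset.sum_congr rfl (fun k _ => ?_)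
    simp only [ContinuousLinearMap.smul_apply, map_smul, smul_eq_mul]
    ring
  set P := Bs.filter (fun k => 0 ≤ ε k) with hP
  set N := Bs.filter (fun k => ¬ 0 ≤ ε k) with hN
  have hsplit : ∑ k ∈ Bs, (ε k * B.c k f) • B.e k = B.S P f - B.S N f := by
    rw [← Finset.sum_filter_add_sum_filter_not Bs (fun k => 0 ≤ ε k)
      (fun k => (ε k * B.c k f) • B.e k)]
    have hPsum : ∑ k ∈ P, (ε k * B.c k f) • B.e k = B.S P f := by
      refine Finset.sum_congr rfl (fun k hkP => ?_)
      rw [hP, Finset.mem_filter] at hkP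
      have : ε k = 1 := by
        have := hε k hkP.1
        rw [abs_of_nonneg hkP.2] at this; exact this
      rw [this, one_mul]
    have hNsum : ∑ k ∈ N, (ε k * B.c k f) • B.e k = - B.S N f := by
      rw [BBasis.S, ← Finset.sum_neg_distrib]
      refine Finset.sum_congr rfl (fun k hkN => ?_)
      rw [hN, Finset.mem_filter] at hkN
      have hlt : ε k < 0 := lt_of_not_ge hkN.2
      have : ε k = -1 := by
        have := hε k hkN.1
        rw [abs_of_neg hlt] at this; linarith
      rw [this]
      simp [BBasis.S]
    rw [hPsum, hNsum]
    rw [sub_eq_add_neg]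
  rw [happ, hsplit]
  have h1 : |x (B.S P f - B.S N f)| ≤ ‖B.S P f‖ + ‖B.S N f‖ := by
    calc |x (B.S P f - B.S N f)| ≤ ‖x‖ * ‖B.S P f - B.S N f‖ := x.le_opNorm _
      _ ≤ 1 * ‖B.S P f - B.S N f‖ :=
          mul_le_mul_of_nonneg_right hx (norm_nonneg _)
      _ = ‖B.S P f - B.S N f‖ := one_mul _
      _ ≤ ‖B.S P f‖ + ‖B.S N f‖ := norm_sub_le _ _
  have hcard : ∀ Q : Finset ℕ, Q ⊆ Bs → Ct * (Q.card : ℝ)^t ≤ Ct * (Bs.card:ℝ)^t := by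
    intro Q hQ
    refine mul_le_mul_of_nonneg_left ?_ (by linarith)
    exact Real.rpow_le_rpow (Nat.cast_nonneg _)
      (Nat.cast_le.2 (Finset.card_le_card hQ)) ht0
  have h2 := (hk P f).trans (mul_le_mul_of_nonneg_right
    (hcard P (Finset.filter_subset _ _)) (norm_nonneg f))
  have h3 := (hk N f).trans (mul_le_mul_of_nonneg_right
    (hcard N (Finset.filter_subset _ _)) (norm_nonneg f))
  calc ‖x (B.S P f - B.S N f)‖ = |x (B.S P f - B.S N f)| := rfl
    _ ≤ ‖B.S P f‖ + ‖B.S N f‖ := h1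
    _ ≤ Ct * (Bs.card:ℝ)^t * ‖f‖ + Ct * (Bs.card:ℝ)^t * ‖f‖ := add_le_add h2 h3
    _ = 2 * Ct * (Bs.card:ℝ)^t * ‖f‖ := by ring

/-- the finite-rank operator `g ↦ (lam n * g (e n))_{n ∈ Bs}`. -/
def Tla (Bs : Finset ℕ) (lam : ℕ → ℝ) : (X →L[ℝ] ℝ) →L[ℝ] ℓ2 :=
  ∑ n ∈ Bs, (ContinuousLinearMap.apply ℝ ℝ (B.e n)).smulRight (lp.single 2 n (lam n))

lemma Tla_apply (Bs : Finset ℕ) (lam : ℕ → ℝ) (g : X →L[ℝ] ℝ) :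
    Tla B Bs lam g = ∑ n ∈ Bs, lp.single 2 n (g (B.e n) * lam n) := by
  classical
  rw [Tla, ContinuousLinearMap.sum_apply]
  refine Finset.sum_congr rfl (fun n _ => ?_)
  rw [ContinuousLinearMap.smulRight_apply]
  rw [show g (B.e n) * lam n = g (B.e n) • lam n from rfl, lp.single_smul]
  rfl

lemma Tla_norm_sq (Bs : Finset ℕ) (lam : ℕ → ℝ) (g : X →L[ℝ] ℝ) :
    ‖Tla B Bs lam g‖ * ‖Tla B Bs lam g‖ = ∑ n ∈ Bs, (lam n * g (B.e n))^2 := by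
  classical
  rw [← rpow_tr2, Tla_apply]
  rw [lp.norm_sum_single tr2pos (fun n => g (B.e n) * lam n) Bs]
  refine Finset.sum_congr rfl (fun n _ => ?_)
  rw [rpow_tr2]
  simp only [Real.norm_eq_abs]
  rw [abs_mul_abs_self]
  ring

lemma Tla_norm_le (Bs : Finset ℕ) (lam : ℕ → ℝ) (W : ℝ) (hW : 0 ≤ W)
    (hyp : ∀ g : X →L[ℝ] ℝ, ‖g‖ ≤ 1 → ∑ n ∈ Bs, (lam n * g (B.e n))^2 ≤ W^2) :
    ‖Tla B Bs lam‖ ≤ W := by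
  refine ContinuousLinearMap.opNorm_le_bound _ hW (fun g => ?_)
  rcases eq_or_ne g 0 with hg | hg
  · simp [hg]
  · have hgn : (0:ℝ) < ‖g‖ := norm_pos_iff.2 hg
    set u := ‖g‖⁻¹ • g with hu
    have hun : ‖u‖ ≤ 1 := by
      rw [hu, norm_smul ‖g‖⁻¹ g, norm_inv, norm_norm, inv_mul_cancel₀ hgn.ne']
    have h1 : ‖Tla B Bs lam u‖ ≤ W := by
      have h2 := Tla_norm_sq B Bs lam u
      have h3 := hyp u hun
      nlinarith [norm_nonneg (Tla B Bs lam u)]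
    have hgu : g = ‖g‖ • u := by
      rw [hu, smul_smul, mul_inv_cancel₀ hgn.ne', one_smul]
    calc ‖Tla B Bs lam g‖ = ‖Tla B Bs lam (‖g‖ • u)‖ := by rw [← hgu]
      _ = ‖g‖ * ‖Tla B Bs lam u‖ := by rw [map_smul, norm_smul, norm_norm]
      _ ≤ ‖g‖ * W := mul_le_mul_of_nonneg_left h1 hgn.le
      _ = W * ‖g‖ := mul_comm _ _

lemma Tla_apply_c (Bs : Finset ℕ) (lam : ℕ → ℝ) {k : ℕ} (hk : k ∈ Bs) :
    Tla B Bs lam (B.c k) = lp.single 2 k (lam k) := by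
  classical
  rw [Tla_apply]
  rw [Finset.sum_eq_single_of_mem k hk]
  · rw [B.biorth k k]; simp
  · intro n _ hn
    rw [B.biorth k n, if_neg (Ne.symm hn)]
    rw [zero_mul]
    rw [show (0:ℝ) = (0:ℝ) • lam n by simp, lp.single_smul]
    simp

lemma keyGT {t Ct : ℝ} (ht0 : 0 < t)
    (hk : ∀ (A : Finset ℕ) (f : X), ‖B.S A f‖ ≤ Ct * (A.card : ℝ) ^ t * ‖f‖)
    (hGT : IsGTSpace (X →L[ℝ] ℝ)) :
    ∃ c₀ : ℝ, 1 ≤ c₀ ∧ ∀ x : X →L[ℝ] ℝ, ‖x‖ ≤ 1 →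
      ∀ (Bs : Finset ℕ) (lam : ℕ → ℝ) (W : ℝ), 0 < W →
      (∀ g : X →L[ℝ] ℝ, ‖g‖ ≤ 1 → ∑ n ∈ Bs, (lam n * g (B.e n))^2 ≤ W^2) →
      ∑ n ∈ Bs, |lam n| * |x (B.e n)| ≤ c₀ * W * (Bs.card:ℝ)^t := by
  obtain ⟨K, hK0, hK⟩ := uniformGT hGT
  have hCt : 1 ≤ Ct := ct_ge_one B hk
  refine ⟨max (2*K*Ct) 1, le_max_right _ _, fun x hx Bs lam W hW hyp => ?_⟩
  set lam' : ℕ → ℝ := fun n => W⁻¹ * lam n with hlam'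
  have hT1 : ‖Tla B Bs lam'‖ ≤ 1 := by
    refine Tla_norm_le B Bs lam' 1 zero_le_one (fun g hg => ?_)
    have h0 := hyp g hg
    have : ∑ n ∈ Bs, (lam' n * g (B.e n))^2
        = W⁻¹^2 * ∑ n ∈ Bs, (lam n * g (B.e n))^2 := by
      rw [Finset.mul_sum]
      refine Finset.sum_congr rfl (fun n _ => ?_)
      rw [hlam']; ring
    rw [one_pow, this]
    calc W⁻¹^2 * ∑ n ∈ Bs, (lam n * g (B.e n))^2 ≤ W⁻¹^2 * W^2 := by
          refine mul_le_mul_of_nonneg_left h0 (by positivity)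
      _ = 1 := by
          rw [← mul_pow, inv_mul_cancel₀ hW.ne', one_pow]
  set g : ℕ → (X →L[ℝ] ℝ) := fun k => x (B.e k) • B.c k with hg
  have hcond : ∀ ε : ℕ → ℝ, (∀ k ∈ Bs, |ε k| = 1) →
      ‖∑ k ∈ Bs, ε k • g k‖ ≤ 2 * Ct * (Bs.card:ℝ)^t :=
    fun ε hε => signEst B ht0.le hCt hk x hx Bs ε hε
  have hmain := hK (Tla B Bs lam') hT1 Bs g (2 * Ct * (Bs.card:ℝ)^t) hcond
  have hterm : ∀ k ∈ Bs, ‖Tla B Bs lam' (g k)‖ = W⁻¹ * (|lam k| * |x (B.e k)|) := by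
    intro k hkBs
    rw [hg]
    simp only [map_smul]
    rw [Tla_apply_c B Bs lam' hkBs]
    rw [norm_smul]
    have h5 : ‖(lp.single 2 k (lam' k) : lp (fun _ : ℕ => ℝ) 2)‖ = |lam' k| := by
      have := lp.norm_single (E := fun _ : ℕ => ℝ) (p := 2) (by norm_num) k (lam' k)
      simpa using this
    rw [h5, hlam', Real.norm_eq_abs, abs_mul, abs_of_pos (inv_pos.2 hW)]
    ring
  rw [Finset.sum_congr rfl hterm, ← Finset.mul_sum] at hmain
  have hfin : ∑ n ∈ Bs, |lam n| * |x (B.e n)| ≤ 2*K*Ct * W * (Bs.card:ℝ)^t := by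
    have h6 := mul_le_mul_of_nonneg_left hmain hW.le
    rw [← mul_assoc, mul_inv_cancel₀ hW.ne', one_mul] at h6
    calc ∑ n ∈ Bs, |lam n| * |x (B.e n)| ≤ W * (K * (2 * Ct * (Bs.card:ℝ)^t)) := h6
      _ = 2*K*Ct * W * (Bs.card:ℝ)^t := by ring
  refine hfin.trans ?_
  have : (0:ℝ) ≤ W * (Bs.card:ℝ)^t := by positivity
  nlinarith [le_max_left (2*K*Ct) 1]

/-- weak type `1/ρ` estimate for coefficient sequences of unit functionals -/
def WeakTy (B : BBasis X) (ρ c : ℝ) : Prop :=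
  1 ≤ c ∧ ∀ g : X →L[ℝ] ℝ, ‖g‖ ≤ 1 → ∀ (Bs : Finset ℕ) (a : ℝ), 0 < a →
    (∀ n ∈ Bs, a ≤ |g (B.e n)|) → (Bs.card : ℝ) ≤ (c / a) ^ (1/ρ)

lemma coord_bound {M : ℝ} (hMe : ∀ n, ‖B.e n‖ ≤ M) (g : X →L[ℝ] ℝ)
    (hg : ‖g‖ ≤ 1) (n : ℕ) : |g (B.e n)| ≤ M :=
  calc |g (B.e n)| ≤ ‖g‖ * ‖B.e n‖ := g.le_opNorm _
    _ ≤ 1 * M := mul_le_mul hg (hMe n) (norm_nonneg _) zero_le_one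
    _ = M := one_mul _

lemma geom_le {x : ℝ} (h0 : 0 ≤ x) (h1 : x < 1) (J : Finset ℕ) :
    ∑ j ∈ J, x^j ≤ (1-x)⁻¹ := by
  have hsub : J ⊆ Finset.range (J.sup id + 1) := fun j hj =>
    Finset.mem_range.2 (Nat.lt_succ_of_le (Finset.le_sup (f := id) hj))
  set N := J.sup id + 1
  have h2 : ∑ j ∈ J, x^j ≤ ∑ j ∈ Finset.range N, x^j :=
    Finset.sum_le_sum_of_subset_of_nonneg hsub (fun i _ _ => pow_nonneg h0 i)
  refine h2.trans ?_
  have h3 := geom_sum_mul x N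
  have h1x : 0 < 1 - x := by linarith
  have h4 : (∑ i ∈ Finset.range N, x^i) * (1-x) = 1 - x^N := by linear_combination -h3
  rw [inv_eq_one_div, le_div_iff₀ h1x, h4]
  have : 0 ≤ x^N := pow_nonneg h0 N
  linarith

lemma min_le_rpow_interp {x y θ : ℝ} (hx : 0 ≤ x) (hy : 0 ≤ y) (hθ0 : 0 ≤ θ)
    (hθ1 : θ ≤ 1) : min x y ≤ x^(1-θ) * y^θ := by
  have hm0 : 0 ≤ min x y := le_min hx hy
  calc min x y = (min x y)^((1-θ)+θ) := by
        rw [show (1-θ)+θ = 1 by ring, Real.rpow_one]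
    _ = (min x y)^(1-θ) * (min x y)^θ := Real.rpow_add' hm0 (by norm_num)
    _ ≤ x^(1-θ) * y^θ := by
        refine mul_le_mul (Real.rpow_le_rpow hm0 (min_le_left _ _) (by linarith))
          (Real.rpow_le_rpow hm0 (min_le_right _ _) hθ0)
          (Real.rpow_nonneg hm0 _) (Real.rpow_nonneg hx _)

lemma wk_mono {ρ ρ' c M : ℝ} (hρ' : 0 < ρ') (hle : ρ' ≤ ρ) (hρ : 0 < ρ)
    (hMe : ∀ n, ‖B.e n‖ ≤ M) (h : WeakTy B ρ c) : WeakTy B ρ' (max c M) := by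
  obtain ⟨hc1, h⟩ := h
  refine ⟨le_trans hc1 (le_max_left _ _), fun g hg Bs a ha hBs => ?_⟩
  rcases Finset.eq_empty_or_nonempty Bs with rfl | ⟨n0, hn0⟩
  · simp only [Finset.card_empty, Nat.cast_zero]
    positivity
  · have haM : a ≤ max c M := le_trans (le_trans (hBs n0 hn0)
      (coord_bound B hMe g hg n0)) (le_max_right _ _)
    have h1 : 1 ≤ max c M / a := (one_le_div ha).2 haM
    calc (Bs.card : ℝ) ≤ (c / a) ^ (1/ρ) := h g hg Bs a ha hBs
      _ ≤ (max c M / a) ^ (1/ρ) := by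
          refine Real.rpow_le_rpow (by positivity) ?_ (by positivity)
          exact div_le_div_of_nonneg_right (le_max_left _ _) ha.le
      _ ≤ (max c M / a) ^ (1/ρ') := Real.rpow_le_rpow_of_exponent_le h1
          (one_div_le_one_div_of_le hρ' hle)


lemma wk_ofL1 {β c₆ : ℝ} (hβ0 : 0 ≤ β) (hβ1 : β < 1) (hc : 1 ≤ c₆)
    (h : ∀ g : X →L[ℝ] ℝ, ‖g‖ ≤ 1 → ∀ Bs : Finset ℕ, Bs.Nonempty →
       ∑ n ∈ Bs, |g (B.e n)| ≤ c₆ * (Bs.card:ℝ)^β) :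
    WeakTy B (1-β) c₆ := by
  refine ⟨hc, fun g hg Bs a ha hBs => ?_⟩
  rcases Finset.eq_empty_or_nonempty Bs with rfl | hne
  · simp only [Finset.card_empty, Nat.cast_zero]
    positivity
  have hm0 : (0:ℝ) < (Bs.card:ℝ) := by
    exact_mod_cast Finset.card_pos.2 hne
  have hl : (Bs.card:ℝ) * a ≤ ∑ n ∈ Bs, |g (B.e n)| := by
    calc (Bs.card:ℝ) * a = ∑ _n ∈ Bs, a := by rw [Finset.sum_const, nsmul_eq_mul]
      _ ≤ ∑ n ∈ Bs, |g (B.e n)| := Finset.sum_le_sum hBs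
  have h2 : (Bs.card:ℝ) * a ≤ c₆ * (Bs.card:ℝ)^β := hl.trans (h g hg Bs hne)
  have hsplit : (Bs.card:ℝ) = (Bs.card:ℝ)^(1-β) * (Bs.card:ℝ)^β := by
    rw [← Real.rpow_add hm0, show (1-β)+β = 1 by ring, Real.rpow_one]
  have hβpos : 0 < (Bs.card:ℝ)^β := Real.rpow_pos_of_pos hm0 β
  have h1β : 0 < 1 - β := by linarith
  have h3 : (Bs.card:ℝ)^(1-β) ≤ c₆ / a := by
    rw [le_div_iff₀ ha]
    have h4 : (Bs.card:ℝ)^(1-β) * (Bs.card:ℝ)^β * a ≤ c₆ * (Bs.card:ℝ)^β := by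
      rw [← hsplit]; exact h2
    have h5 : ((Bs.card:ℝ)^(1-β) * a) * (Bs.card:ℝ)^β ≤ c₆ * (Bs.card:ℝ)^β := by
      calc ((Bs.card:ℝ)^(1-β) * a) * (Bs.card:ℝ)^β
          = (Bs.card:ℝ)^(1-β) * (Bs.card:ℝ)^β * a := by ring
        _ ≤ c₆ * (Bs.card:ℝ)^β := h4
    exact le_of_mul_le_mul_right h5 hβpos
  calc (Bs.card:ℝ) = ((Bs.card:ℝ)^(1-β))^(1/(1-β)) := by
        rw [← Real.rpow_mul hm0.le, mul_one_div, div_self h1β.ne', Real.rpow_one]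
    _ ≤ (c₆/a)^(1/(1-β)) :=
        Real.rpow_le_rpow (Real.rpow_nonneg hm0.le _) h3 (by positivity)

lemma sum_rpow_of_weak {M ρ c r θ : ℝ} (hM : 0 < M) (hMe : ∀ n, ‖B.e n‖ ≤ M)
    (hρ : 0 < ρ) (hw : WeakTy B ρ c) (hr : 0 < r) (hθ0 : 0 ≤ θ) (hθ1 : θ ≤ 1)
    (hα : 0 < r - θ/ρ) :
    ∃ D : ℝ, 0 < D ∧ ∀ g : X →L[ℝ] ℝ, ‖g‖ ≤ 1 → ∀ Bs : Finset ℕ,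
      ∑ n ∈ Bs, |g (B.e n)| ^ r ≤ D * (Bs.card:ℝ) ^ (1-θ) := by
  classical
  obtain ⟨hc1, hwk⟩ := hw
  have hc0 : (0:ℝ) < c := lt_of_lt_of_le one_pos hc1
  set α := r - θ/ρ with hαdef
  set x := (2:ℝ) ^ (-α) with hxdef
  have hx0 : 0 < x := Real.rpow_pos_of_pos two_pos _
  have hx1 : x < 1 := Real.rpow_lt_one_of_one_lt_of_neg one_lt_two (by linarith)
  set E := (2*c/M)^(θ/ρ) * M^r with hEdef
  have hE0 : 0 < E := by
    apply mul_pos (Real.rpow_pos_of_pos (by positivity) _) (Real.rpow_pos_of_pos hM _)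
  refine ⟨E * (1-x)⁻¹, mul_pos hE0 (inv_pos.2 (by linarith)), fun g hg Bs => ?_⟩
  set m := (Bs.card : ℝ) with hmdef
  have hm0 : (0:ℝ) ≤ m := Nat.cast_nonneg _
  set Bs' := Bs.filter (fun n => g (B.e n) ≠ 0) with hBs'
  have h0 : ∑ n ∈ Bs, |g (B.e n)| ^ r = ∑ n ∈ Bs', |g (B.e n)| ^ r := by
    refine (Finset.sum_filter_of_ne (fun n _ hne => ?_)).symm
    intro hz
    apply hne
    rw [hz]
    simp [Real.zero_rpow hr.ne']
  set lv : ℕ → ℕ := fun n => ⌊Real.logb 2 (M / |g (B.e n)|)⌋₊ with hlv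
  have hda : ∀ n ∈ Bs', 0 < |g (B.e n)| ∧ |g (B.e n)| ≤ M := by
    intro n hn
    rw [hBs', Finset.mem_filter] at hn
    exact ⟨abs_pos.2 hn.2, coord_bound B hMe g hg n⟩
  have hlev : ∀ n ∈ Bs', M / 2^(lv n + 1) < |g (B.e n)| ∧
      |g (B.e n)| ≤ M / 2^(lv n) := by
    intro n hn
    obtain ⟨hd0, hdM⟩ := hda n hn
    set d := |g (B.e n)| with hd
    have hrat : (1:ℝ) ≤ M / d := (one_le_div hd0).2 hdM
    have hlog0 : 0 ≤ Real.logb 2 (M / d) := Real.logb_nonneg one_lt_two hrat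
    have hfl : ((lv n : ℕ):ℝ) ≤ Real.logb 2 (M/d) := Nat.floor_le hlog0
    have hfu : Real.logb 2 (M/d) < (lv n : ℕ) + 1 := Nat.lt_floor_add_one _
    have hMd0 : 0 < M / d := by positivity
    have hkey : (2:ℝ) ^ (Real.logb 2 (M/d)) = M / d :=
      Real.rpow_logb two_pos (by norm_num) hMd0
    have h2l : (2:ℝ)^(lv n) ≤ M / d := by
      calc ((2:ℝ))^(lv n) = (2:ℝ)^((lv n : ℕ):ℝ) := (Real.rpow_natCast 2 (lv n)).symm
        _ ≤ (2:ℝ) ^ (Real.logb 2 (M/d)) :=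
            Real.rpow_le_rpow_of_exponent_le one_le_two hfl
        _ = M / d := hkey
    have h2u : M / d < (2:ℝ)^(lv n + 1) := by
      calc M / d = (2:ℝ) ^ (Real.logb 2 (M/d)) := hkey.symm
        _ < (2:ℝ)^(((lv n + 1 : ℕ)):ℝ) := by
            rw [Real.rpow_lt_rpow_left_iff one_lt_two]
            push_cast
            exact hfu
        _ = (2:ℝ)^(lv n + 1) := Real.rpow_natCast 2 (lv n + 1)
    constructor
    · rw [div_lt_iff₀ (by positivity)]
      rw [div_lt_iff₀ hd0] at h2u
      linarith [h2u]
    · rw [le_div_iff₀ (by positivity)]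
      rw [le_div_iff₀ hd0] at h2l
      linarith [h2l]
  set J := Bs'.image lv with hJ
  have hfw : ∑ n ∈ Bs', |g (B.e n)| ^ r
      = ∑ j ∈ J, ∑ n ∈ Bs'.filter (fun n => lv n = j), |g (B.e n)| ^ r :=
    (Finset.sum_fiberwise_of_maps_to (fun n hn => Finset.mem_image_of_mem lv hn) _).symm
  have hperj : ∀ j ∈ J, ∑ n ∈ Bs'.filter (fun n => lv n = j), |g (B.e n)| ^ r
      ≤ m^(1-θ) * E * x^j := by
    intro j _
    set Dj := Bs'.filter (fun n => lv n = j) with hDj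
    have hDsub : Dj ⊆ Bs := (Finset.filter_subset _ _).trans (Finset.filter_subset _ _)
    have hDm : (Dj.card:ℝ) ≤ m := by
      rw [hmdef]
      exact_mod_cast Finset.card_le_card hDsub
    have hDw : (Dj.card:ℝ) ≤ ((c * 2^(j+1))/M)^(1/ρ) := by
      have hcond : ∀ n ∈ Dj, M / 2^(j+1) ≤ |g (B.e n)| := by
        intro n hn
        rw [hDj, Finset.mem_filter] at hn
        obtain ⟨hn', hnl⟩ := hn
        have hlt := (hlev n hn').1
        rw [hnl] at hlt
        exact hlt.le
      have happ := hwk g hg Dj (M / 2^(j+1)) (by positivity) hcond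
      rwa [div_div_eq_mul_div] at happ
    have hterm : ∀ n ∈ Dj, |g (B.e n)| ^ r ≤ (M / 2^j)^r := by
      intro n hn
      rw [hDj, Finset.mem_filter] at hn
      obtain ⟨hn', hnl⟩ := hn
      have := (hlev n hn').2
      rw [hnl] at this
      exact Real.rpow_le_rpow (abs_nonneg _) this hr.le
    have hsumj : ∑ n ∈ Dj, |g (B.e n)| ^ r ≤ (Dj.card:ℝ) * (M/2^j)^r := by
      have := Finset.sum_le_card_nsmul Dj _ _ hterm
      rwa [nsmul_eq_mul] at this
    have hinterp : (Dj.card:ℝ) ≤ m^(1-θ) * (((c * 2^(j+1))/M)^(1/ρ))^θ := by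
      refine le_trans (le_min hDm hDw) (min_le_rpow_interp hm0 ?_ hθ0 hθ1)
      positivity
    have hMr : (0:ℝ) ≤ (M/2^j)^r := Real.rpow_nonneg (by positivity) _
    have hmain : ∑ n ∈ Dj, |g (B.e n)| ^ r
        ≤ m^(1-θ) * ((((c * 2^(j+1))/M)^(1/ρ))^θ * (M/2^j)^r) := by
      calc ∑ n ∈ Dj, |g (B.e n)| ^ r ≤ (Dj.card:ℝ) * (M/2^j)^r := hsumj
        _ ≤ (m^(1-θ) * (((c * 2^(j+1))/M)^(1/ρ))^θ) * (M/2^j)^r :=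
            mul_le_mul_of_nonneg_right hinterp hMr
        _ = m^(1-θ) * ((((c * 2^(j+1))/M)^(1/ρ))^θ * (M/2^j)^r) := by ring
    refine hmain.trans ?_
    rw [mul_assoc]
    refine mul_le_mul_of_nonneg_left (le_of_eq ?_) (Real.rpow_nonneg hm0 _)
    -- identity: ((c*2^(j+1)/M)^(1/ρ))^θ * (M/2^j)^r = E * x^j
    have hz0 : (0:ℝ) < (2:ℝ)^j := by positivity
    have e1 : (c * 2^(j+1))/M = (2*c/M) * (2:ℝ)^j := by
      rw [pow_succ]
      field_simp
    have e2 : (((c * 2^(j+1))/M)^(1/ρ))^θ = (2*c/M)^(θ/ρ) * ((2:ℝ)^j)^(θ/ρ) := by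
      rw [e1, ← Real.rpow_mul (by positivity), Real.mul_rpow (by positivity) hz0.le]
      rw [one_div, inv_mul_eq_div]
    have e3 : (M/(2:ℝ)^j)^r = M^r / ((2:ℝ)^j)^r :=
      Real.div_rpow hM.le (by positivity) r
    rw [e2, e3, hEdef]
    have e4 : ((2:ℝ)^j)^(θ/ρ) * (M^r / ((2:ℝ)^j)^r)
        = M^r * ((2:ℝ)^j)^(θ/ρ - r) := by
      rw [Real.rpow_sub hz0]
      field_simp
    have e5 : ((2:ℝ)^j)^(θ/ρ - r) = x^j := by
      rw [hxdef]
      rw [← Real.rpow_natCast ((2:ℝ)^(-α)) j, ← Real.rpow_natCast (2:ℝ) j]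
      rw [← Real.rpow_mul (by norm_num), ← Real.rpow_mul (by norm_num)]
      congr 1
      rw [hαdef]
      ring
    calc (2*c/M)^(θ/ρ) * ((2:ℝ)^j)^(θ/ρ) * (M^r / ((2:ℝ)^j)^r)
        = (2*c/M)^(θ/ρ) * (((2:ℝ)^j)^(θ/ρ) * (M^r / ((2:ℝ)^j)^r)) := by ring
      _ = (2*c/M)^(θ/ρ) * (M^r * ((2:ℝ)^j)^(θ/ρ - r)) := by rw [e4]
      _ = (2*c/M)^(θ/ρ) * M^r * x^j := by rw [e5]; ring
  calc ∑ n ∈ Bs, |g (B.e n)| ^ r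
      = ∑ j ∈ J, ∑ n ∈ Bs'.filter (fun n => lv n = j), |g (B.e n)| ^ r := by
        rw [h0, hfw]
    _ ≤ ∑ j ∈ J, m^(1-θ) * E * x^j := Finset.sum_le_sum hperj
    _ = (m^(1-θ) * E) * ∑ j ∈ J, x^j := by rw [← Finset.mul_sum]
    _ ≤ (m^(1-θ) * E) * (1-x)⁻¹ := by
        refine mul_le_mul_of_nonneg_left (geom_le hx0.le hx1 J) ?_
        positivity
    _ = E * (1-x)⁻¹ * m^(1-θ) := by ring


section Steps
variable {t c₀ M : ℝ}
-- the key GT-derived inequality, packaged as a hypothesis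
variable (hkey : ∀ x : X →L[ℝ] ℝ, ‖x‖ ≤ 1 →
      ∀ (Bs : Finset ℕ) (lam : ℕ → ℝ) (W : ℝ), 0 < W →
      (∀ g : X →L[ℝ] ℝ, ‖g‖ ≤ 1 → ∑ n ∈ Bs, (lam n * g (B.e n))^2 ≤ W^2) →
      ∑ n ∈ Bs, |lam n| * |x (B.e n)| ≤ c₀ * W * (Bs.card:ℝ)^t)

lemma rpow2_eq_sq (v : ℝ) : |v| ^ (2:ℝ) = v^2 := by
  rw [show (2:ℝ) = ((2:ℕ):ℝ) by norm_num, Real.rpow_natCast, sq_abs]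

include hkey in
lemma l1step (hV : ∀ mR : ℝ, 1 ≤ mR → 0 < (fun _ : ℝ => (0:ℝ)) mR) : True := trivial

include hkey in
lemma l1_of_l2 {V : ℝ → ℝ} (hV : ∀ mR : ℝ, 1 ≤ mR → 0 < V mR)
    (h2 : ∀ g : X →L[ℝ] ℝ, ‖g‖ ≤ 1 → ∀ Bs : Finset ℕ, Bs.Nonempty →
      ∑ n ∈ Bs, (g (B.e n))^2 ≤ (V (Bs.card:ℝ))^2) :
    ∀ x : X →L[ℝ] ℝ, ‖x‖ ≤ 1 → ∀ Bs : Finset ℕ, Bs.Nonempty →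
      ∑ n ∈ Bs, |x (B.e n)| ≤ c₀ * V (Bs.card:ℝ) * (Bs.card:ℝ)^t := by
  intro x hx Bs hne
  have hm1 : (1:ℝ) ≤ (Bs.card:ℝ) := by
    exact_mod_cast Nat.one_le_iff_ne_zero.2 (Finset.card_ne_zero_of_mem hne.choose_spec)
  have happ := hkey x hx Bs (fun _ => 1) (V (Bs.card:ℝ)) (hV _ hm1)
    (fun g hg => by
      have := h2 g hg Bs hne
      simpa [one_mul] using this)
  simpa [abs_one, one_mul] using happ

include hkey in
lemma stepA (hM : 0 < M) (hMe : ∀ n, ‖B.e n‖ ≤ M) (ht0 : 0 < t) (ht : t < 1/2)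
    (hc₀ : 1 ≤ c₀) {ρ c : ℝ} (hρ0 : 0 < ρ) (hρh : ρ ≤ 1/2) (hw : WeakTy B ρ c) :
    ∃ c', WeakTy B (ρ + (1/2 - t)/2) c' := by
  set η := (1/2 - t)/2 with hη
  have hη0 : 0 < η := by rw [hη]; linarith
  have hηq : η < 1/4 := by rw [hη]; linarith
  set θ := 2*ρ*(1 - η/2) with hθ
  have hθ0 : 0 ≤ θ := by rw [hθ]; nlinarith
  have hθ1 : θ ≤ 1 := by rw [hθ]; nlinarith
  have hα : 0 < 2 - θ/ρ := by
    have h9 : θ/ρ = 2 - η := by rw [hθ]; field_simp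
    rw [h9]; linarith
  obtain ⟨D, hD0, hDb⟩ := sum_rpow_of_weak B hM hMe hρ0 hw (r := 2) two_pos hθ0 hθ1 hα
  set β := t + (1-θ)/2 with hβ
  have hβ0 : 0 ≤ β := by rw [hβ]; nlinarith
  have hβ1 : β < 1 := by rw [hβ]; nlinarith
  set c₆ := max 1 (c₀ * Real.sqrt D) with hc₆
  have hl1 : ∀ g : X →L[ℝ] ℝ, ‖g‖ ≤ 1 → ∀ Bs : Finset ℕ, Bs.Nonempty →
      ∑ n ∈ Bs, |g (B.e n)| ≤ c₆ * (Bs.card:ℝ)^β := by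
    have hmain := l1_of_l2 B hkey (V := fun mR => Real.sqrt (D * mR^(1-θ)))
      (fun mR hm => Real.sqrt_pos.2 (mul_pos hD0 (Real.rpow_pos_of_pos (by linarith) _)))
      (fun g hg Bs hne => by
        rw [Real.sq_sqrt (mul_nonneg hD0.le (Real.rpow_nonneg (Nat.cast_nonneg _) _))]
        have := hDb g hg Bs
        refine le_trans (le_of_eq ?_) this
        exact Finset.sum_congr rfl (fun n _ => (rpow2_eq_sq _).symm))
    intro g hg Bs hne
    beta_reduce at hmain
    refine (hmain g hg Bs hne).trans ?_
    have hm0 : (0:ℝ) < (Bs.card:ℝ) := by exact_mod_cast Finset.card_pos.2 hne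
    have hsq : Real.sqrt (D * (Bs.card:ℝ)^(1-θ)) = Real.sqrt D * (Bs.card:ℝ)^((1-θ)/2) := by
      rw [Real.sqrt_mul hD0.le, Real.sqrt_eq_rpow ((Bs.card:ℝ)^(1-θ)),
        ← Real.rpow_mul hm0.le, mul_one_div]
    rw [hsq]
    have hcomb : (Bs.card:ℝ)^((1-θ)/2) * (Bs.card:ℝ)^t = (Bs.card:ℝ)^β := by
      rw [← Real.rpow_add hm0, hβ]; ring_nf
    calc c₀ * (Real.sqrt D * (Bs.card:ℝ)^((1-θ)/2)) * (Bs.card:ℝ)^t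
        = (c₀ * Real.sqrt D) * ((Bs.card:ℝ)^((1-θ)/2) * (Bs.card:ℝ)^t) := by ring
      _ = (c₀ * Real.sqrt D) * (Bs.card:ℝ)^β := by rw [hcomb]
      _ ≤ c₆ * (Bs.card:ℝ)^β := by
          refine mul_le_mul_of_nonneg_right (le_max_right _ _) ?_
          positivity
  have hwk := wk_ofL1 B hβ0 hβ1 (le_max_left _ _) hl1
  have h1β : ρ + η ≤ 1 - β := by rw [hβ, hθ, hη]; nlinarith
  refine ⟨max c₆ M, wk_mono B (by linarith) h1β (by linarith) hMe hwk⟩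

include hkey in
lemma stepB (hM : 0 < M) (hMe : ∀ n, ‖B.e n‖ ≤ M) (ht0 : 0 < t) (ht : t < 1/2)
    (hc₀ : 1 ≤ c₀) {ρ c : ℝ} (hρ0 : 0 < ρ) (hρh : 1/2 < ρ) (hw : WeakTy B ρ c) :
    ∃ c', WeakTy B (1 - t) c' := by
  have hα : 0 < 2 - (1:ℝ)/ρ := by
    have : (1:ℝ)/ρ < 2 := by
      rw [div_lt_iff₀ hρ0]; linarith
    linarith
  obtain ⟨D, hD0, hDb⟩ := sum_rpow_of_weak B hM hMe hρ0 hw (r := 2) two_pos zero_le_one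
    le_rfl hα
  have hl1 : ∀ g : X →L[ℝ] ℝ, ‖g‖ ≤ 1 → ∀ Bs : Finset ℕ, Bs.Nonempty →
      ∑ n ∈ Bs, |g (B.e n)| ≤ max 1 (c₀ * Real.sqrt D) * (Bs.card:ℝ)^t := by
    have hmain := l1_of_l2 B hkey (V := fun _ => Real.sqrt D)
      (fun mR hm => Real.sqrt_pos.2 hD0)
      (fun g hg Bs hne => by
        rw [Real.sq_sqrt hD0.le]
        have h5 := hDb g hg Bs
        rw [sub_self, Real.rpow_zero, mul_one] at h5
        refine le_trans (le_of_eq ?_) h5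
        exact Finset.sum_congr rfl (fun n _ => (rpow2_eq_sq _).symm))
    intro g hg Bs hne
    beta_reduce at hmain
    refine (hmain g hg Bs hne).trans ?_
    refine mul_le_mul_of_nonneg_right (le_max_right _ _) ?_
    positivity
  exact ⟨_, wk_ofL1 B ht0.le (by linarith) (le_max_left _ _) hl1⟩

include hkey in
lemma baseWk (hM : 0 < M) (hMe : ∀ n, ‖B.e n‖ ≤ M) (ht0 : 0 < t) (ht : t < 1/2)
    (hc₀ : 1 ≤ c₀) : ∃ c', WeakTy B (1 - 2*t) c' := by
  -- first the ℓ2 estimate via the self-improving trick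
  have hL2 : ∀ x : X →L[ℝ] ℝ, ‖x‖ ≤ 1 → ∀ Bs : Finset ℕ,
      ∑ n ∈ Bs, (x (B.e n))^2 ≤ (c₀ * M * (Bs.card:ℝ)^t)^2 := by
    intro x hx Bs
    set Sg2 := ∑ n ∈ Bs, (x (B.e n))^2 with hSg
    have hSg0 : 0 ≤ Sg2 := Finset.sum_nonneg (fun n _ => sq_nonneg _)
    rcases hSg0.eq_or_lt with hz | hz
    · rw [← hz]; positivity
    · have hW : 0 < M * Real.sqrt Sg2 := mul_pos hM (Real.sqrt_pos.2 hz)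
      have happ := hkey x hx Bs (fun n => x (B.e n)) (M * Real.sqrt Sg2) hW
        (fun g hg => by
          have hterm : ∀ n ∈ Bs, (x (B.e n) * g (B.e n))^2 ≤ (x (B.e n))^2 * M^2 := by
            intro n _
            have h6 : (g (B.e n))^2 ≤ M^2 := by
              have := coord_bound B hMe g hg n
              nlinarith [abs_nonneg (g (B.e n)), sq_abs (g (B.e n))]
            calc (x (B.e n) * g (B.e n))^2 = (x (B.e n))^2 * (g (B.e n))^2 := by ring
              _ ≤ (x (B.e n))^2 * M^2 := mul_le_mul_of_nonneg_left h6 (sq_nonneg _)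
          calc ∑ n ∈ Bs, (x (B.e n) * g (B.e n))^2 ≤ ∑ n ∈ Bs, (x (B.e n))^2 * M^2 :=
                Finset.sum_le_sum hterm
            _ = Sg2 * M^2 := by rw [← Finset.sum_mul]
            _ = (M * Real.sqrt Sg2)^2 := by
                rw [mul_pow, Real.sq_sqrt hSg0]; ring)
      beta_reduce at happ
      have hid : ∑ n ∈ Bs, |x (B.e n)| * |x (B.e n)| = Sg2 := by
        refine Finset.sum_congr rfl (fun n _ => ?_)
        rw [abs_mul_abs_self]
        exact (sq _).symm
      rw [hid] at happ
      set P := c₀ * M * (Bs.card:ℝ)^t with hP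
      have hP0 : 0 ≤ P := by rw [hP]; positivity
      have hs0 : 0 < Real.sqrt Sg2 := Real.sqrt_pos.2 hz
      have h7 : Real.sqrt Sg2 * Real.sqrt Sg2 ≤ P * Real.sqrt Sg2 := by
        rw [Real.mul_self_sqrt hSg0]
        calc Sg2 ≤ c₀ * (M * Real.sqrt Sg2) * (Bs.card:ℝ)^t := happ
          _ = P * Real.sqrt Sg2 := by rw [hP]; ring
      have h8 : Real.sqrt Sg2 ≤ P := le_of_mul_le_mul_right h7 hs0
      calc Sg2 = Real.sqrt Sg2 * Real.sqrt Sg2 := (Real.mul_self_sqrt hSg0).symm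
        _ ≤ P * P := mul_le_mul h8 h8 hs0.le hP0
        _ = P^2 := (sq P).symm
  -- now get the ℓ1 estimate and conclude
  have hl1 : ∀ g : X →L[ℝ] ℝ, ‖g‖ ≤ 1 → ∀ Bs : Finset ℕ, Bs.Nonempty →
      ∑ n ∈ Bs, |g (B.e n)| ≤ max 1 (c₀^2 * M) * (Bs.card:ℝ)^(2*t) := by
    have hmain := l1_of_l2 B hkey (V := fun mR => c₀ * M * mR^t)
      (fun mR hm => by
        have : (0:ℝ) < mR := by linarith
        positivity)
      (fun g hg Bs hne => hL2 g hg Bs)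
    intro g hg Bs hne
    beta_reduce at hmain
    refine (hmain g hg Bs hne).trans ?_
    have hm0 : (0:ℝ) < (Bs.card:ℝ) := by exact_mod_cast Finset.card_pos.2 hne
    have hcomb : (Bs.card:ℝ)^t * (Bs.card:ℝ)^t = (Bs.card:ℝ)^(2*t) := by
      rw [← Real.rpow_add hm0]; ring_nf
    calc c₀ * (c₀ * M * (Bs.card:ℝ)^t) * (Bs.card:ℝ)^t
        = (c₀^2 * M) * ((Bs.card:ℝ)^t * (Bs.card:ℝ)^t) := by ring
      _ = (c₀^2 * M) * (Bs.card:ℝ)^(2*t) := by rw [hcomb]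
      _ ≤ max 1 (c₀^2 * M) * (Bs.card:ℝ)^(2*t) := by
          refine mul_le_mul_of_nonneg_right (le_max_right _ _) ?_
          positivity
  exact ⟨_, wk_ofL1 B (by linarith) (by linarith) (le_max_left _ _) hl1⟩

include hkey in
lemma iterWk (hM : 0 < M) (hMe : ∀ n, ‖B.e n‖ ≤ M) (ht0 : 0 < t) (ht : t < 1/2)
    (hc₀ : 1 ≤ c₀) : ∃ c', WeakTy B (1 - t) c' := by
  set γ := (1/2 - t)/2 with hγ
  have hγ0 : 0 < γ := by rw [hγ]; linarith
  have hall : ∀ j : ℕ, ∃ c', WeakTy B (min (1 - 2*t + j*γ) (1-t)) c' := by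
    intro j
    induction j with
    | zero =>
      obtain ⟨c', hc'⟩ := baseWk B hkey hM hMe ht0 ht hc₀
      refine ⟨c', ?_⟩
      have hmin : min (1 - 2*t + (0:ℕ)*γ) (1-t) = 1 - 2*t := by
        push_cast
        rw [zero_mul, add_zero]
        exact min_eq_left (by linarith)
      rw [hmin]
      exact hc'
    | succ j ih =>
      obtain ⟨c, hc⟩ := ih
      set ρ := min (1 - 2*t + j*γ) (1-t) with hρdef
      have hjγ : (0:ℝ) ≤ (j:ℝ)*γ := by positivity
      have hjγ' : (0:ℝ) ≤ ((j+1:ℕ):ℝ)*γ := by positivity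
      have hρ0 : 0 < ρ := lt_min (by linarith) (by linarith)
      have htar0 : 0 < min (1 - 2*t + ((j+1:ℕ):ℝ)*γ) (1-t) := lt_min (by linarith) (by linarith)
      rcases le_or_gt ρ (1/2) with hhalf | hhalf
      · obtain ⟨c', hc'⟩ := stepA B hkey hM hMe ht0 ht hc₀ hρ0 hhalf hc
        have hle : min (1 - 2*t + ((j+1:ℕ):ℝ)*γ) (1-t) ≤ ρ + γ := by
          rcases le_total (1 - 2*t + (j:ℝ)*γ) (1-t) with h | h
          · have hρeq : ρ = 1 - 2*t + (j:ℝ)*γ := min_eq_left h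
            calc min (1 - 2*t + ((j+1:ℕ):ℝ)*γ) (1-t) ≤ 1 - 2*t + ((j:ℝ)+1)*γ := by
                  push_cast
                  exact min_le_left _ _
              _ = ρ + γ := by rw [hρeq]; ring
          · exfalso
            have hρeq : ρ = 1-t := min_eq_right h
            rw [hρeq] at hhalf
            linarith
        exact ⟨_, wk_mono B htar0 hle (by linarith) hMe hc'⟩
      · obtain ⟨c', hc'⟩ := stepB B hkey hM hMe ht0 ht hc₀ hρ0 hhalf hc
        exact ⟨_, wk_mono B htar0 (min_le_right _ _) (by linarith) hMe hc'⟩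
  obtain ⟨j, hj⟩ := exists_nat_ge (t/γ)
  obtain ⟨c', hc'⟩ := hall j
  have hmin : min (1 - 2*t + (j:ℝ)*γ) (1-t) = 1-t := by
    refine min_eq_right ?_
    have h1 : t ≤ (j:ℝ)*γ := by
      rw [div_le_iff₀ hγ0] at hj
      linarith
    linarith
  rw [hmin] at hc'
  exact ⟨c', hc'⟩

end Steps

lemma real_rpow_add_le {x y q : ℝ} (hx : 0 ≤ x) (hy : 0 ≤ y) (hq0 : 0 ≤ q)
    (hq1 : q ≤ 1) : (x+y)^q ≤ x^q + y^q := by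
  lift x to ℝ≥0 using hx
  lift y to ℝ≥0 using hy
  exact_mod_cast NNReal.rpow_add_le_add_rpow x y hq0 hq1

lemma sum_le_rpow_sum {q : ℝ} (hq0 : 0 < q) (hq1 : q ≤ 1) (A : Finset ℕ) (f : ℕ → ℝ)
    (hf : ∀ i, 0 ≤ f i) : ∑ i ∈ A, f i ≤ (∑ i ∈ A, f i ^ q) ^ (1/q) := by
  have hs0 : ∀ (s : Finset ℕ), 0 ≤ ∑ i ∈ s, f i := fun s => Finset.sum_nonneg fun i _ => hf i
  have key : (∑ i ∈ A, f i) ^ q ≤ ∑ i ∈ A, f i ^ q := by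
    induction A using Finset.cons_induction with
    | empty => simp [Real.zero_rpow hq0.ne']
    | cons a s ha ih =>
      rw [Finset.sum_cons, Finset.sum_cons]
      calc (f a + ∑ i ∈ s, f i)^q ≤ (f a)^q + (∑ i ∈ s, f i)^q :=
            real_rpow_add_le (hf a) (hs0 s) hq0.le hq1
        _ ≤ (f a)^q + ∑ i ∈ s, f i ^ q := add_le_add le_rfl ih
  calc ∑ i ∈ A, f i = ((∑ i ∈ A, f i)^q)^(1/q) := by
        rw [← Real.rpow_mul (hs0 A), mul_one_div, div_self hq0.ne', Real.rpow_one]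
    _ ≤ (∑ i ∈ A, f i ^ q)^(1/q) :=
        Real.rpow_le_rpow (Real.rpow_nonneg (hs0 A) _) key (by positivity)


end Stmt7Aux

/-- if the unconditionality constants of a basis of a Banach space `X`
satisfy `𝐤_m ≲ m^t` for some `0 < t < 1/2` and `X*` is a GT space, then the basis is
`q`-Hilbertian for every `q < 1/t`. -/
theorem stmt7 {X : Type*} [NormedAddCommGroup X] [NormedSpace ℝ X] [CompleteSpace X]
    (B : BBasis X) (t Ct : ℝ) (ht0 : 0 < t) (ht : t < 1 / 2)
    (hk : ∀ (A : Finset ℕ) (f : X), ‖B.S A f‖ ≤ Ct * (A.card : ℝ) ^ t * ‖f‖)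
    (hGT : IsGTSpace (X →L[ℝ] ℝ)) :
    ∀ q : ℝ, 0 < q → q < 1 / t → ∃ Cq : ℝ, ∀ (A : Finset ℕ) (a : ℕ → ℝ),
      ‖∑ n ∈ A, a n • B.e n‖ ≤ Cq * (∑ n ∈ A, |a n| ^ q) ^ (1 / q) := by
  classical
  intro q hq0 hq
  obtain ⟨M₀, hMe₀⟩ := B.e_bdd
  set M := max M₀ 1 with hMdef
  have hMe : ∀ n, ‖B.e n‖ ≤ M := fun n => (hMe₀ n).trans (le_max_left _ _)
  have hM0 : (0:ℝ) < M := lt_of_lt_of_le one_pos (le_max_right _ _)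
  rcases le_or_gt q 1 with hq1 | hq1
  · refine ⟨M, fun A a => ?_⟩
    have h1 : ‖∑ n ∈ A, a n • B.e n‖ ≤ ∑ n ∈ A, |a n| * M := by
      refine (norm_sum_le _ _).trans (Finset.sum_le_sum fun n _ => ?_)
      rw [norm_smul, Real.norm_eq_abs]
      exact mul_le_mul_of_nonneg_left (hMe n) (abs_nonneg _)
    have h2 : ∑ n ∈ A, |a n| * M = M * ∑ n ∈ A, |a n| := by
      rw [← Finset.sum_mul]; ring
    have h3 := Stmt7Aux.sum_le_rpow_sum hq0 hq1 A (fun n => |a n|)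
      (fun n => abs_nonneg _)
    calc ‖∑ n ∈ A, a n • B.e n‖ ≤ M * ∑ n ∈ A, |a n| := by rw [← h2]; exact h1
      _ ≤ M * (∑ n ∈ A, |a n| ^ q)^(1/q) := mul_le_mul_of_nonneg_left h3 hM0.le
  · obtain ⟨c₀, hc₀1, hkey⟩ := Stmt7Aux.keyGT B ht0 hk hGT
    obtain ⟨c', hwt⟩ := Stmt7Aux.iterWk B hkey hM0 hMe ht0 ht hc₀1
    set r := Real.conjExponent q with hrdef
    have hconj : q.HolderConjugate r := Real.HolderConjugate.conjExponent hq1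
    have hr1 : 1 < r := hconj.symm.lt
    have hr0 : 0 < r := by linarith
    have h1t : 0 < 1 - t := by linarith
    have hqt : t < 1/q := by
      rw [lt_div_iff₀ hq0]
      have h4 := (lt_div_iff₀ ht0).1 hq
      linarith
    have hrinv : r⁻¹ = 1 - q⁻¹ := by
      have := hconj.inv_add_inv_eq_one; linarith
    have hinv : r⁻¹ < 1 - t := by
      rw [hrinv]
      have h5 : t < q⁻¹ := by rw [← one_div]; exact hqt
      linarith
    have h2 : 1 < r * (1-t) := by
      have h3 := mul_lt_mul_of_pos_left hinv hr0
      rwa [mul_inv_cancel₀ hr0.ne'] at h3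
    have hα : 0 < r - 1/(1-t) := by
      have h6 : 1/(1-t) < r := (div_lt_iff₀ h1t).2 (by linarith)
      linarith
    obtain ⟨D, hD0, hDb⟩ := Stmt7Aux.sum_rpow_of_weak B hM0 hMe h1t hwt hr0
      zero_le_one le_rfl hα
    refine ⟨D^(1/r), fun A a => ?_⟩
    set f := ∑ n ∈ A, a n • B.e n with hfdef
    have hrhs0 : 0 ≤ (∑ n ∈ A, |a n| ^ q)^(1/q) :=
      Real.rpow_nonneg (Finset.sum_nonneg fun n _ => Real.rpow_nonneg (abs_nonneg _) _) _
    rcases eq_or_ne f 0 with hf0 | hf0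
    · rw [hf0, norm_zero]
      exact mul_nonneg (Real.rpow_nonneg hD0.le _) hrhs0
    · obtain ⟨g, hg1, hgf⟩ := exists_dual_vector'' ℝ f
      have hgf' : g f = ‖f‖ := by exact_mod_cast hgf
      have hexp : g f = ∑ n ∈ A, a n * g (B.e n) := by
        rw [hfdef, map_sum]
        refine Finset.sum_congr rfl fun n _ => ?_
        rw [map_smul, smul_eq_mul]
      have habs : ‖f‖ ≤ ∑ n ∈ A, |a n| * |g (B.e n)| := by
        rw [← hgf']
        calc g f ≤ |g f| := le_abs_self _
          _ = |∑ n ∈ A, a n * g (B.e n)| := by rw [hexp]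
          _ ≤ ∑ n ∈ A, |a n * g (B.e n)| := Finset.abs_sum_le_sum_abs _ _
          _ = ∑ n ∈ A, |a n| * |g (B.e n)| :=
              Finset.sum_congr rfl fun n _ => abs_mul _ _
      have hhold := Real.inner_le_Lp_mul_Lq_of_nonneg A hconj
        (f := fun n => |a n|) (g := fun n => |g (B.e n)|)
        (fun n _ => abs_nonneg _) (fun n _ => abs_nonneg _)
      have hsecond : (∑ n ∈ A, |g (B.e n)|^r)^(1/r) ≤ D^(1/r) := by
        refine Real.rpow_le_rpow
          (Finset.sum_nonneg fun n _ => Real.rpow_nonneg (abs_nonneg _) _) ?_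
          (by positivity)
        have h5 := hDb g hg1 A
        rwa [sub_self, Real.rpow_zero, mul_one] at h5
      calc ‖f‖ ≤ ∑ n ∈ A, |a n| * |g (B.e n)| := habs
        _ ≤ (∑ n ∈ A, |a n|^q)^(1/q) * (∑ n ∈ A, |g (B.e n)|^r)^(1/r) := hhold
        _ ≤ (∑ n ∈ A, |a n|^q)^(1/q) * D^(1/r) :=
            mul_le_mul_of_nonneg_left hsecond hrhs0
        _ = D^(1/r) * (∑ n ∈ A, |a n|^q)^(1/q) := mul_comm _ _
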